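/- Let L>0 and Ω=(0,L)×(-1,1). There exists a constant c>0, depending only on Ω, such that for every κ>0, every smooth Ω-periodic, divergence-free vector field v=(v₁,v₂), and every smooth Ω-periodic scalar function ξ: |∫_Ω ((v·∇)ξ)(x) Δξ(x) dx| ≤ (κ/20)‖Δξ‖² + (c/κ³)‖v‖²(‖v‖² + ‖∇v‖²)‖∇ξ‖². -/

import Mathlib

open MeasureTheory Real Filter

noncomputable section

/-- First partial derivative. -/
def d1 (f : ℝ × ℝ → ℝ) (p : ℝ × ℝ) : ℝ := fderiv ℝ f p (1, 0)

/-- Second partial derivative. -/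
def d2 (f : ℝ × ℝ → ℝ) (p : ℝ × ℝ) : ℝ := fderiv ℝ f p (0, 1)

/-- Laplacian. -/
def lap (f : ℝ × ℝ → ℝ) (p : ℝ × ℝ) : ℝ := d1 (d1 f) p + d2 (d2 f) p

/-- The domain Ω = (0,L) × (-1,1). -/
def Omg (L : ℝ) : Set (ℝ × ℝ) := Set.Ioo 0 L ×ˢ Set.Ioo (-1) 1

/-- Squared L² norm over Ω. -/
def nrmSq (L : ℝ) (f : ℝ × ℝ → ℝ) : ℝ := ∫ p in Omg L, (f p) ^ 2

/-- L² norm over Ω. -/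
def nrm (L : ℝ) (f : ℝ × ℝ → ℝ) : ℝ := Real.sqrt (nrmSq L f)

/-- Squared L² norm of the gradient over Ω. -/
def gradNrmSq (L : ℝ) (f : ℝ × ℝ → ℝ) : ℝ := ∫ p in Omg L, ((d1 f p) ^ 2 + (d2 f p) ^ 2)

/-- L² norm of the gradient over Ω. -/
def gradNrm (L : ℝ) (f : ℝ × ℝ → ℝ) : ℝ := Real.sqrt (gradNrmSq L f)

/-- Squared L² norm of the Laplacian over Ω. -/
def lapNrmSq (L : ℝ) (f : ℝ × ℝ → ℝ) : ℝ := ∫ p in Omg L, (lap f p) ^ 2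

/-- L² norm of the Laplacian over Ω. -/
def lapNrm (L : ℝ) (f : ℝ × ℝ → ℝ) : ℝ := Real.sqrt (lapNrmSq L f)

/-- Ω-periodic: L-periodic in x₁ and 2-periodic in x₂. -/
def OmgPeriodic (L : ℝ) (f : ℝ × ℝ → ℝ) : Prop :=
  (∀ x y : ℝ, f (x + L, y) = f (x, y)) ∧ (∀ x y : ℝ, f (x, y + 2) = f (x, y))

/-- Divergence-free vector field. -/
def DivFree (u₁ u₂ : ℝ × ℝ → ℝ) : Prop := ∀ p, d1 u₁ p + d2 u₂ p = 0

/-- Symmetric vector field: first component even in x₂, second odd in x₂. -/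
def Symm (u₁ u₂ : ℝ × ℝ → ℝ) : Prop :=
  (∀ x y : ℝ, u₁ (x, -y) = u₁ (x, y)) ∧ (∀ x y : ℝ, u₂ (x, -y) = -u₂ (x, y))





-- smoothness of d1/d2
lemma contDiff_d1 {f : ℝ × ℝ → ℝ} (hf : ContDiff ℝ (⊤ : ℕ∞) f) : ContDiff ℝ (⊤ : ℕ∞) (d1 f) := by
  exact (hf.fderiv_right (m := (⊤ : ℕ∞)) (by exact_mod_cast le_top)).clm_apply contDiff_const

lemma contDiff_d2 {f : ℝ × ℝ → ℝ} (hf : ContDiff ℝ (⊤ : ℕ∞) f) : ContDiff ℝ (⊤ : ℕ∞) (d2 f) := by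
  exact (hf.fderiv_right (m := (⊤ : ℕ∞)) (by exact_mod_cast le_top)).clm_apply contDiff_const

-- partial derivative as 1D derivative
lemma hasDerivAt_d1 {f : ℝ × ℝ → ℝ} (hf : ContDiff ℝ (⊤ : ℕ∞) f) (x y : ℝ) :
    HasDerivAt (fun t => f (t, y)) (d1 f (x, y)) x := by
  have hF : HasFDerivAt f (fderiv ℝ f (x, y)) (x, y) :=
    (hf.differentiable (by simp) (x, y)).hasFDerivAt
  have hg : HasFDerivAt (fun t : ℝ => (t, y)) ((ContinuousLinearMap.id ℝ ℝ).prod 0) x :=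
    (hasFDerivAt_id x).prodMk (hasFDerivAt_const y x)
  have := (hF.comp x hg).hasDerivAt
  simpa [d1, Function.comp_def] using this

lemma hasDerivAt_d2 {f : ℝ × ℝ → ℝ} (hf : ContDiff ℝ (⊤ : ℕ∞) f) (x y : ℝ) :
    HasDerivAt (fun t => f (x, t)) (d2 f (x, y)) y := by
  have hF : HasFDerivAt f (fderiv ℝ f (x, y)) (x, y) :=
    (hf.differentiable (by simp) (x, y)).hasFDerivAt
  have hg : HasFDerivAt (fun t : ℝ => (x, t)) ((0 : ℝ →L[ℝ] ℝ).prod (ContinuousLinearMap.id ℝ ℝ)) y :=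
    (hasFDerivAt_const x y).prodMk (hasFDerivAt_id y)
  have := (hF.comp y hg).hasDerivAt
  simpa [d2, Function.comp_def] using this

-- periodicity of derivatives
lemma periodic_shift {f : ℝ × ℝ → ℝ} (hf : ContDiff ℝ (⊤ : ℕ∞) f) (c : ℝ × ℝ)
    (hper : ∀ p : ℝ × ℝ, f (p + c) = f p) (p : ℝ × ℝ) :
    fderiv ℝ f (p + c) = fderiv ℝ f p := by
  have h1 : HasFDerivAt (fun q => f (q + c)) (fderiv ℝ f (p + c)) p := by
    have := ((hf.differentiable (by simp) (p + c)).hasFDerivAt).comp p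
      ((hasFDerivAt_id p).add_const c)
    simpa [Function.comp_def] using this
  rw [show (fun q => f (q + c)) = f from funext hper] at h1
  exact h1.fderiv.symm

lemma OmgPeriodic.d1 {L : ℝ} {f : ℝ × ℝ → ℝ} (hf : ContDiff ℝ (⊤ : ℕ∞) f)
    (hp : OmgPeriodic L f) : OmgPeriodic L (d1 f) := by
  constructor
  · intro x y
    have := periodic_shift hf (L, 0) (fun p => by
      have h' : p + ((L:ℝ), (0:ℝ)) = (p.1 + L, p.2) := by ext <;> simp
      rw [h']; exact hp.1 p.1 p.2) (x, y)
    show fderiv ℝ f (x + L, y) (1, 0) = fderiv ℝ f (x, y) (1, 0)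
    rw [show ((x + L, y) : ℝ × ℝ) = (x, y) + (L, 0) from by ext <;> simp, this]
  · intro x y
    have := periodic_shift hf (0, 2) (fun p => by
      have h' : p + ((0:ℝ), (2:ℝ)) = (p.1, p.2 + 2) := by ext <;> simp
      rw [h']; exact hp.2 p.1 p.2) (x, y)
    show fderiv ℝ f (x, y + 2) (1, 0) = fderiv ℝ f (x, y) (1, 0)
    rw [show ((x, y + 2) : ℝ × ℝ) = (x, y) + (0, 2) from by ext <;> simp, this]

lemma OmgPeriodic.d2' {L : ℝ} {f : ℝ × ℝ → ℝ} (hf : ContDiff ℝ (⊤ : ℕ∞) f)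
    (hp : OmgPeriodic L f) : OmgPeriodic L (d2 f) := by
  constructor
  · intro x y
    have := periodic_shift hf (L, 0) (fun p => by
      have h' : p + ((L:ℝ), (0:ℝ)) = (p.1 + L, p.2) := by ext <;> simp
      rw [h']; exact hp.1 p.1 p.2) (x, y)
    show fderiv ℝ f (x + L, y) (0, 1) = fderiv ℝ f (x, y) (0, 1)
    rw [show ((x + L, y) : ℝ × ℝ) = (x, y) + (L, 0) from by ext <;> simp, this]
  · intro x y
    have := periodic_shift hf (0, 2) (fun p => by
      have h' : p + ((0:ℝ), (2:ℝ)) = (p.1, p.2 + 2) := by ext <;> simp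
      rw [h']; exact hp.2 p.1 p.2) (x, y)
    show fderiv ℝ f (x, y + 2) (0, 1) = fderiv ℝ f (x, y) (0, 1)
    rw [show ((x, y + 2) : ℝ × ℝ) = (x, y) + (0, 2) from by ext <;> simp, this]

-- Clairaut
lemma clairaut {f : ℝ × ℝ → ℝ} (hf : ContDiff ℝ (⊤ : ℕ∞) f) :
    d1 (d2 f) = d2 (d1 f) := by
  funext p
  have hd : ∀ u : ℝ × ℝ, DifferentiableAt ℝ (fderiv ℝ f) p := by
    intro u
    exact ((hf.fderiv_right (m := (⊤ : ℕ∞)) (by exact_mod_cast le_top)).differentiable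
      (by simp) p)
  have hsym : IsSymmSndFDerivAt ℝ f p :=
    (hf.contDiffAt).isSymmSndFDerivAt (by simp only [minSmoothness_of_isRCLikeNormedField]; exact WithTop.coe_le_coe.2 le_top)
  have h1 : d1 (d2 f) p = fderiv ℝ (fderiv ℝ f) p (1, 0) (0, 1) := by
    show (fderiv ℝ (fun q => (fderiv ℝ f q) (0, 1)) p) (1, 0) = _
    rw [fderiv_clm_apply (hd p) (differentiableAt_const ((0:ℝ),(1:ℝ)))]
    simp
  have h2 : d2 (d1 f) p = fderiv ℝ (fderiv ℝ f) p (0, 1) (1, 0) := by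
    show (fderiv ℝ (fun q => (fderiv ℝ f q) (1, 0)) p) (0, 1) = _
    rw [fderiv_clm_apply (hd p) (differentiableAt_const ((1:ℝ),(0:ℝ)))]
    simp
  rw [h1, h2, hsym.eq]

-- Integrability / MemLp / CS
lemma omg_meas (L : ℝ) : MeasurableSet (Omg L) :=
  measurableSet_Ioo.prod measurableSet_Ioo

lemma intOn2 {L : ℝ} {F : ℝ × ℝ → ℝ} (hF : Continuous F) : IntegrableOn F (Omg L) := by
  have hK : IsCompact ((Set.Icc (0:ℝ) L) ×ˢ (Set.Icc (-1:ℝ) 1)) :=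
    isCompact_Icc.prod isCompact_Icc
  exact (hF.continuousOn.integrableOn_compact hK).mono_set
    (Set.prod_mono Set.Ioo_subset_Icc_self Set.Ioo_subset_Icc_self)

lemma intOn1 {a b : ℝ} {F : ℝ → ℝ} (hF : Continuous F) : IntegrableOn F (Set.Ioo a b) :=
  (hF.continuousOn.integrableOn_compact isCompact_Icc).mono_set Set.Ioo_subset_Icc_self

lemma memL2_2 {L : ℝ} {F : ℝ × ℝ → ℝ} (hF : Continuous F) :
    MemLp F (ENNReal.ofReal 2) (volume.restrict (Omg L)) := by
  haveI : IsFiniteMeasure (volume.restrict (Omg L)) := by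
    constructor
    rw [Measure.restrict_apply_univ]
    apply lt_of_le_of_lt (measure_mono
      (Set.prod_mono Set.Ioo_subset_Icc_self Set.Ioo_subset_Icc_self))
    exact (isCompact_Icc.prod isCompact_Icc).measure_lt_top
  obtain ⟨C, hC⟩ := (isCompact_Icc.prod (isCompact_Icc : IsCompact (Set.Icc (-1:ℝ) 1))).exists_bound_of_continuousOn hF.continuousOn
  refine MemLp.of_bound hF.aestronglyMeasurable.restrict C ?_
  refine (ae_restrict_iff' (omg_meas L)).2 (Filter.Eventually.of_forall fun p hp => ?_)
  exact hC p (Set.prod_mono Set.Ioo_subset_Icc_self Set.Ioo_subset_Icc_self hp)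

lemma memL2_1 {a b : ℝ} {F : ℝ → ℝ} (hF : Continuous F) :
    MemLp F (ENNReal.ofReal 2) (volume.restrict (Set.Ioo a b)) := by
  haveI : IsFiniteMeasure (volume.restrict (Set.Ioo a b)) := by
    constructor
    rw [Measure.restrict_apply_univ]
    exact lt_of_le_of_lt (measure_mono Set.Ioo_subset_Icc_self) isCompact_Icc.measure_lt_top
  obtain ⟨C, hC⟩ := (isCompact_Icc : IsCompact (Set.Icc a b)).exists_bound_of_continuousOn
    hF.continuousOn
  refine MemLp.of_bound hF.aestronglyMeasurable.restrict C ?_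
  refine (ae_restrict_iff' measurableSet_Ioo).2 (Filter.Eventually.of_forall fun p hp => ?_)
  exact hC p (Set.Ioo_subset_Icc_self hp)

/-- generic L² Cauchy-Schwarz -/
lemma cs_gen {α : Type*} [MeasurableSpace α] {μ : Measure α} {f g : α → ℝ}
    (hf : MemLp f (ENNReal.ofReal 2) μ) (hg : MemLp g (ENNReal.ofReal 2) μ) :
    |∫ a, f a * g a ∂μ| ≤ Real.sqrt (∫ a, (f a)^2 ∂μ) * Real.sqrt (∫ a, (g a)^2 ∂μ) := by
  have h0 : |∫ a, f a * g a ∂μ| ≤ ∫ a, ‖f a‖ * ‖g a‖ ∂μ := by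
    calc |∫ a, f a * g a ∂μ| = ‖∫ a, f a * g a ∂μ‖ := (Real.norm_eq_abs _).symm
      _ ≤ ∫ a, ‖f a * g a‖ ∂μ := norm_integral_le_integral_norm _
      _ = ∫ a, ‖f a‖ * ‖g a‖ ∂μ := by
          congr 1; funext a; exact norm_mul _ _
  have h1 : ∫ a, ‖f a‖ * ‖g a‖ ∂μ ≤
      (∫ a, ‖f a‖ ^ (2:ℝ) ∂μ) ^ ((1:ℝ)/2) * (∫ a, ‖g a‖ ^ (2:ℝ) ∂μ) ^ ((1:ℝ)/2) :=
    MeasureTheory.integral_mul_norm_le_Lp_mul_Lq (by constructor <;> norm_num) hf hg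
  have e1 : ∀ (h : α → ℝ), (∫ a, ‖h a‖ ^ (2:ℝ) ∂μ) = ∫ a, (h a)^2 ∂μ := by
    intro h; congr 1; funext a
    rw [show ((2:ℝ) = ((2:ℕ):ℝ)) by norm_num, Real.rpow_natCast]
    simp [sq_abs]
  rw [e1 f, e1 g] at h1
  rw [Real.sqrt_eq_rpow, Real.sqrt_eq_rpow]
  exact h0.trans h1

-- Fubini lemmas
lemma restrict_omg_eq (L : ℝ) :
    (volume : Measure (ℝ × ℝ)).restrict (Omg L) =
      ((volume : Measure ℝ).restrict (Set.Ioo 0 L)).prod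
        ((volume : Measure ℝ).restrict (Set.Ioo (-1) 1)) := by
  rw [Measure.prod_restrict, Omg, Measure.volume_eq_prod]

lemma fub_xy {L : ℝ} (F : ℝ × ℝ → ℝ) (hF : IntegrableOn F (Omg L)) :
    ∫ p in Omg L, F p = ∫ x in Set.Ioo (0:ℝ) L, ∫ y in Set.Ioo (-1:ℝ) 1, F (x, y) := by
  rw [show (∫ p in Omg L, F p) = ∫ p, F p ∂((volume : Measure (ℝ×ℝ)).restrict (Omg L)) from rfl,
    restrict_omg_eq L]
  exact integral_prod F (by rwa [← restrict_omg_eq L])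

lemma fub_yx {L : ℝ} (F : ℝ × ℝ → ℝ) (hF : IntegrableOn F (Omg L)) :
    ∫ p in Omg L, F p = ∫ y in Set.Ioo (-1:ℝ) 1, ∫ x in Set.Ioo (0:ℝ) L, F (x, y) := by
  rw [show (∫ p in Omg L, F p) = ∫ p, F p ∂((volume : Measure (ℝ×ℝ)).restrict (Omg L)) from rfl,
    restrict_omg_eq L]
  exact integral_prod_symm F (by rwa [← restrict_omg_eq L])

lemma marg_y {L : ℝ} (F : ℝ × ℝ → ℝ) (hF : IntegrableOn F (Omg L)) :
    IntegrableOn (fun y => ∫ x in Set.Ioo (0:ℝ) L, F (x, y)) (Set.Ioo (-1:ℝ) 1) := by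
  have h : Integrable F (((volume : Measure ℝ).restrict (Set.Ioo 0 L)).prod
      ((volume : Measure ℝ).restrict (Set.Ioo (-1) 1))) := by rwa [← restrict_omg_eq L]
  have := h.swap.integral_prod_left
  exact this

lemma marg_x {L : ℝ} (F : ℝ × ℝ → ℝ) (hF : IntegrableOn F (Omg L)) :
    IntegrableOn (fun x => ∫ y in Set.Ioo (-1:ℝ) 1, F (x, y)) (Set.Ioo (0:ℝ) L) := by
  have h : Integrable F (((volume : Measure ℝ).restrict (Set.Ioo 0 L)).prod
      ((volume : Measure ℝ).restrict (Set.Ioo (-1) 1))) := by rwa [← restrict_omg_eq L]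
  exact h.integral_prod_left

-- 1D lemmas
lemma ftc_Ioo {a b : ℝ} (hab : a ≤ b) (φ φ' : ℝ → ℝ)
    (hd : ∀ x, HasDerivAt φ (φ' x) x) (hc' : Continuous φ') :
    ∫ s in Set.Ioo a b, φ' s = φ b - φ a := by
  rw [← integral_Ioc_eq_integral_Ioo, ← intervalIntegral.integral_of_le hab]
  exact intervalIntegral.integral_eq_sub_of_hasDerivAt (fun x _ => hd x)
    (hc'.intervalIntegrable a b)

lemma oneD_bound {a b : ℝ} (hab : a < b) (φ φ' : ℝ → ℝ)
    (hd : ∀ x, HasDerivAt φ (φ' x) x) (hc : Continuous φ) (hc' : Continuous φ')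
    {x : ℝ} (hx : x ∈ Set.Icc a b) :
    φ x ≤ (b - a)⁻¹ * (∫ s in Set.Ioo a b, φ s) + ∫ s in Set.Ioo a b, |φ' s| := by
  set K := ∫ s in Set.Ioo a b, |φ' s| with hK
  have habs : ∀ s ∈ Set.Icc a b, φ x ≤ φ s + K := by
    intro s hs
    have h1 : φ x - φ s = ∫ t in s..x, φ' t :=
      (intervalIntegral.integral_eq_sub_of_hasDerivAt (fun t _ => hd t)
        (hc'.intervalIntegrable s x)).symm
    have h2 : |∫ t in s..x, φ' t| ≤ ∫ t in Set.uIoc s x, |φ' t| := by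
      simpa [Real.norm_eq_abs] using
        intervalIntegral.norm_integral_le_integral_norm_uIoc (f := φ') (a := s) (b := x)
    have h3 : ∫ t in Set.uIoc s x, |φ' t| ≤ ∫ t in Set.Icc a b, |φ' t| := by
      apply setIntegral_mono_set ((hc'.abs).continuousOn.integrableOn_compact isCompact_Icc)
        (Filter.Eventually.of_forall fun t => abs_nonneg _)
      apply HasSubset.Subset.eventuallyLE
      rw [Set.uIoc]
      intro t ht
      constructor
      · exact le_trans (le_min hs.1 hx.1) (le_of_lt ht.1)
      · exact le_trans ht.2 (max_le hs.2 hx.2)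
    have h4 : (∫ t in Set.Icc a b, |φ' t|) = K := integral_Icc_eq_integral_Ioo
    have : φ x - φ s ≤ K := by
      rw [h1]
      calc ∫ t in s..x, φ' t ≤ |∫ t in s..x, φ' t| := le_abs_self _
        _ ≤ K := by rw [← h4]; exact h2.trans h3
    linarith
  have hvol : (volume (Set.Ioo a b)).toReal = b - a := by
    rw [Real.volume_Ioo, ENNReal.toReal_ofReal (by linarith)]
  have hmono : ∫ s in Set.Ioo a b, φ x ≤ ∫ s in Set.Ioo a b, (φ s + K) := by
    apply setIntegral_mono_on (integrableOn_const ?_)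
      ((intOn1 hc).add (integrableOn_const ?_)) measurableSet_Ioo
    · intro s hs; exact habs s (Set.Ioo_subset_Icc_self hs)
    · rw [Real.volume_Ioo]; exact ENNReal.ofReal_ne_top
    · rw [Real.volume_Ioo]; exact ENNReal.ofReal_ne_top
  rw [setIntegral_const, measureReal_def, hvol, smul_eq_mul] at hmono
  rw [integral_add (intOn1 hc) (integrableOn_const (by
    rw [Real.volume_Ioo]; exact ENNReal.ofReal_ne_top)), setIntegral_const, measureReal_def, hvol,
    smul_eq_mul] at hmono
  have hpos : (0:ℝ) < b - a := by linarith
  have h5 : φ x = (b - a)⁻¹ * ((b - a) * φ x) := by field_simp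
  rw [h5]
  have h6 : (b - a)⁻¹ * ((b - a) * φ x) ≤ (b - a)⁻¹ * ((∫ s in Set.Ioo a b, φ s) + (b - a) * K) :=
    mul_le_mul_of_nonneg_left hmono (by positivity)
  calc (b - a)⁻¹ * ((b - a) * φ x) ≤ (b - a)⁻¹ * ((∫ s in Set.Ioo a b, φ s) + (b - a) * K) := h6
    _ = (b - a)⁻¹ * (∫ s in Set.Ioo a b, φ s) + K := by field_simp

lemma poincare_1d {a b : ℝ} (hab : a < b) (φ φ' : ℝ → ℝ)
    (hd : ∀ x, HasDerivAt φ (φ' x) x) (hc : Continuous φ) (hc' : Continuous φ')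
    (hz : ∫ s in Set.Ioo a b, φ s = 0) :
    ∫ s in Set.Ioo a b, (φ s)^2 ≤ (b - a)^2 * ∫ s in Set.Ioo a b, (φ' s)^2 := by
  set K := ∫ s in Set.Ioo a b, |φ' s| with hK
  have hK0 : 0 ≤ K := setIntegral_nonneg measurableSet_Ioo fun s _ => abs_nonneg _
  have hbd : ∀ x ∈ Set.Icc a b, |φ x| ≤ K := by
    intro x hx
    have h1 := oneD_bound hab φ φ' hd hc hc' hx
    have h2 := oneD_bound hab (fun s => -φ s) (fun s => -φ' s)
      (fun s => (hd s).neg) hc.neg hc'.neg hx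
    simp only [integral_neg, hz, abs_neg, neg_zero, mul_zero, zero_add] at h1 h2
    rw [← hK] at h1 h2
    rw [abs_le]; constructor <;> linarith
  -- K ≤ sqrt (b-a) * sqrt (∫ φ'²)
  have hQ0 : 0 ≤ ∫ s in Set.Ioo a b, (φ' s)^2 :=
    setIntegral_nonneg measurableSet_Ioo fun s _ => sq_nonneg _
  have hcs : K ≤ Real.sqrt (∫ s in Set.Ioo a b, (φ' s)^2) * Real.sqrt (b - a) := by
    have h := cs_gen (μ := volume.restrict (Set.Ioo a b)) (f := fun s => |φ' s|)
      (g := fun _ => (1:ℝ)) (memL2_1 hc'.abs) (memL2_1 continuous_const)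
    simp only [mul_one] at h
    have e1 : (∫ s in Set.Ioo a b, (|φ' s|)^2) = ∫ s in Set.Ioo a b, (φ' s)^2 := by
      congr 1; funext s; exact sq_abs _
    have e2 : (∫ (_ : ℝ) in Set.Ioo a b, ((1:ℝ))^2) = b - a := by
      rw [one_pow, setIntegral_const, measureReal_def, smul_eq_mul, mul_one, Real.volume_Ioo,
        ENNReal.toReal_ofReal (by linarith)]
    rw [e1, e2] at h
    calc K = |(∫ s in Set.Ioo a b, |φ' s|)| := (abs_of_nonneg hK0).symm
      _ ≤ _ := h
  have hK2 : K^2 ≤ (b - a) * (∫ s in Set.Ioo a b, (φ' s)^2) := by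
    have := mul_self_le_mul_self hK0 hcs
    calc K^2 = K * K := by ring
      _ ≤ (Real.sqrt (∫ s in Set.Ioo a b, (φ' s)^2) * Real.sqrt (b - a)) *
          (Real.sqrt (∫ s in Set.Ioo a b, (φ' s)^2) * Real.sqrt (b - a)) := this
      _ = (b - a) * (∫ s in Set.Ioo a b, (φ' s)^2) := by
          rw [show ∀ u v : ℝ, (u*v)*(u*v) = (u*u)*(v*v) from fun u v => by ring,
            Real.mul_self_sqrt hQ0, Real.mul_self_sqrt (by linarith)]
          ring
  calc ∫ s in Set.Ioo a b, (φ s)^2 ≤ ∫ (_ : ℝ) in Set.Ioo a b, K^2 := by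
        apply setIntegral_mono_on (intOn1 (hc.pow 2)) (integrableOn_const (by
          rw [Real.volume_Ioo]; exact ENNReal.ofReal_ne_top)) measurableSet_Ioo
        intro s hs
        have := hbd s (Set.Ioo_subset_Icc_self hs)
        calc (φ s)^2 = |φ s|^2 := (sq_abs _).symm
          _ ≤ K^2 := by apply pow_le_pow_left₀ (abs_nonneg _) this
      _ = (b - a) * K^2 := by
        rw [setIntegral_const, measureReal_def, smul_eq_mul, Real.volume_Ioo,
          ENNReal.toReal_ofReal (by linarith)]
      _ ≤ (b - a) * ((b - a) * ∫ s in Set.Ioo a b, (φ' s)^2) :=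
        mul_le_mul_of_nonneg_left hK2 (by linarith)
      _ = (b - a)^2 * ∫ s in Set.Ioo a b, (φ' s)^2 := by ring

-- zero averages from periodicity
lemma zero_avg_x {L : ℝ} (hL : 0 < L) {ξ : ℝ × ℝ → ℝ} (hξ : ContDiff ℝ (⊤ : ℕ∞) ξ)
    (hp : OmgPeriodic L ξ) (y : ℝ) : ∫ x in Set.Ioo (0:ℝ) L, d1 ξ (x, y) = 0 := by
  have := ftc_Ioo hL.le (fun x => ξ (x, y)) (fun x => d1 ξ (x, y))
    (fun x => hasDerivAt_d1 hξ x y)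
    ((contDiff_d1 hξ).continuous.comp (continuous_id.prodMk continuous_const))
  rw [this]
  have h1 := hp.1 0 y
  rw [zero_add] at h1
  show ξ (L, y) - ξ (0, y) = 0
  rw [h1, sub_self]

lemma zero_avg_y {L : ℝ} {ξ : ℝ × ℝ → ℝ} (hξ : ContDiff ℝ (⊤ : ℕ∞) ξ)
    (hp : OmgPeriodic L ξ) (x : ℝ) : ∫ y in Set.Ioo (-1:ℝ) 1, d2 ξ (x, y) = 0 := by
  have := ftc_Ioo (by norm_num : (-1:ℝ) ≤ 1) (fun y => ξ (x, y)) (fun y => d2 ξ (x, y))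
    (fun y => hasDerivAt_d2 hξ x y)
    ((contDiff_d2 hξ).continuous.comp (continuous_const.prodMk continuous_id))
  rw [this]
  have h2 := hp.2 x (-1)
  norm_num at h2
  show ξ (x, 1) - ξ (x, -1) = 0
  rw [h2, sub_self]

-- 2D Poincaré
lemma poincare_x {L : ℝ} (hL : 0 < L) {g : ℝ × ℝ → ℝ} (hg : ContDiff ℝ (⊤ : ℕ∞) g)
    (hz : ∀ y : ℝ, ∫ x in Set.Ioo (0:ℝ) L, g (x, y) = 0) :
    nrmSq L g ≤ L^2 * nrmSq L (d1 g) := by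
  have hgc : Continuous g := hg.continuous
  have hg1c : Continuous (d1 g) := (contDiff_d1 hg).continuous
  have e1 : nrmSq L g = ∫ y in Set.Ioo (-1:ℝ) 1, ∫ x in Set.Ioo (0:ℝ) L, (g (x, y))^2 :=
    fub_yx _ (intOn2 (hgc.pow 2))
  have e2 : nrmSq L (d1 g) = ∫ y in Set.Ioo (-1:ℝ) 1, ∫ x in Set.Ioo (0:ℝ) L, (d1 g (x, y))^2 :=
    fub_yx _ (intOn2 (hg1c.pow 2))
  rw [e1, e2, ← integral_const_mul]
  apply setIntegral_mono_on
  · exact marg_y (fun p => (g p)^2) (intOn2 (hgc.pow 2))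
  · exact (marg_y (L := L) (fun p => (d1 g p)^2) (intOn2 (hg1c.pow 2))).const_mul _
  · exact measurableSet_Ioo
  · intro y _
    have := poincare_1d hL (fun x => g (x, y)) (fun x => d1 g (x, y))
      (fun x => hasDerivAt_d1 hg x y)
      (hgc.comp (continuous_id.prodMk continuous_const))
      (hg1c.comp (continuous_id.prodMk continuous_const)) (hz y)
    simpa using this

lemma poincare_y {L : ℝ} {g : ℝ × ℝ → ℝ} (hg : ContDiff ℝ (⊤ : ℕ∞) g)
    (hz : ∀ x : ℝ, ∫ y in Set.Ioo (-1:ℝ) 1, g (x, y) = 0) :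
    nrmSq L g ≤ 4 * nrmSq L (d2 g) := by
  have hgc : Continuous g := hg.continuous
  have hg2c : Continuous (d2 g) := (contDiff_d2 hg).continuous
  have e1 : nrmSq L g = ∫ x in Set.Ioo (0:ℝ) L, ∫ y in Set.Ioo (-1:ℝ) 1, (g (x, y))^2 :=
    fub_xy _ (intOn2 (hgc.pow 2))
  have e2 : nrmSq L (d2 g) = ∫ x in Set.Ioo (0:ℝ) L, ∫ y in Set.Ioo (-1:ℝ) 1, (d2 g (x, y))^2 :=
    fub_xy _ (intOn2 (hg2c.pow 2))
  rw [e1, e2, ← integral_const_mul]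
  apply setIntegral_mono_on
  · exact marg_x (fun p => (g p)^2) (intOn2 (hgc.pow 2))
  · exact (marg_x (L := L) (fun p => (d2 g p)^2) (intOn2 (hg2c.pow 2))).const_mul _
  · exact measurableSet_Ioo
  · intro x _
    have := poincare_1d (by norm_num : (-1:ℝ) < 1) (fun y => g (x, y)) (fun y => d2 g (x, y))
      (fun y => hasDerivAt_d2 hg x y)
      (hgc.comp (continuous_const.prodMk continuous_id))
      (hg2c.comp (continuous_const.prodMk continuous_id)) (hz x)
    norm_num at this
    simpa using this

-- integral of d1 over Omg is zero
lemma int_d1_zero {L : ℝ} (hL : 0 < L) {H : ℝ × ℝ → ℝ} (hH : ContDiff ℝ (⊤ : ℕ∞) H)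
    (hp : OmgPeriodic L H) : ∫ p in Omg L, d1 H p = 0 := by
  rw [fub_yx _ (intOn2 (contDiff_d1 hH).continuous)]
  simp only [zero_avg_x hL hH hp]
  simp

lemma int_d2_zero {L : ℝ} {H : ℝ × ℝ → ℝ} (hH : ContDiff ℝ (⊤ : ℕ∞) H)
    (hp : OmgPeriodic L H) : ∫ p in Omg L, d2 H p = 0 := by
  rw [fub_xy _ (intOn2 (contDiff_d2 hH).continuous)]
  simp only [zero_avg_y hH hp]
  simp

lemma d1_mul {F G : ℝ × ℝ → ℝ} (hF : ContDiff ℝ (⊤ : ℕ∞) F) (hG : ContDiff ℝ (⊤ : ℕ∞) G) :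
    d1 (fun p => F p * G p) = fun p => d1 F p * G p + F p * d1 G p := by
  funext p
  have hF' : DifferentiableAt ℝ F p := hF.differentiable (by simp) p
  have hG' : DifferentiableAt ℝ G p := hG.differentiable (by simp) p
  show (fderiv ℝ (fun q => F q * G q) p) (1, 0) = _
  rw [fderiv_fun_mul hF' hG']
  simp [d1]
  ring

lemma d2_mul {F G : ℝ × ℝ → ℝ} (hF : ContDiff ℝ (⊤ : ℕ∞) F) (hG : ContDiff ℝ (⊤ : ℕ∞) G) :
    d2 (fun p => F p * G p) = fun p => d2 F p * G p + F p * d2 G p := by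
  funext p
  have hF' : DifferentiableAt ℝ F p := hF.differentiable (by simp) p
  have hG' : DifferentiableAt ℝ G p := hG.differentiable (by simp) p
  show (fderiv ℝ (fun q => F q * G q) p) (0, 1) = _
  rw [fderiv_fun_mul hF' hG']
  simp [d2]
  ring

lemma OmgPeriodic.mul {L : ℝ} {F G : ℝ × ℝ → ℝ} (hF : OmgPeriodic L F)
    (hG : OmgPeriodic L G) : OmgPeriodic L (fun p => F p * G p) :=
  ⟨fun x y => by simp [hF.1 x y, hG.1 x y], fun x y => by simp [hF.2 x y, hG.2 x y]⟩

lemma ibp1 {L : ℝ} (hL : 0 < L) {F G : ℝ × ℝ → ℝ}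
    (hF : ContDiff ℝ (⊤ : ℕ∞) F) (hG : ContDiff ℝ (⊤ : ℕ∞) G)
    (hpF : OmgPeriodic L F) (hpG : OmgPeriodic L G) :
    ∫ p in Omg L, d1 F p * G p = -∫ p in Omg L, F p * d1 G p := by
  have h0 : ∫ p in Omg L, (d1 F p * G p + F p * d1 G p) = 0 := by
    rw [show (fun p => d1 F p * G p + F p * d1 G p) = d1 (fun p => F p * G p) from
      (d1_mul hF hG).symm]
    exact int_d1_zero hL (hF.mul hG) (hpF.mul hpG)
  rw [integral_add (f := fun p => d1 F p * G p) (g := fun p => F p * d1 G p) (intOn2 ((contDiff_d1 hF).continuous.mul hG.continuous))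
    (intOn2 (hF.continuous.mul (contDiff_d1 hG).continuous))] at h0
  linarith

lemma ibp2 {L : ℝ} {F G : ℝ × ℝ → ℝ}
    (hF : ContDiff ℝ (⊤ : ℕ∞) F) (hG : ContDiff ℝ (⊤ : ℕ∞) G)
    (hpF : OmgPeriodic L F) (hpG : OmgPeriodic L G) :
    ∫ p in Omg L, d2 F p * G p = -∫ p in Omg L, F p * d2 G p := by
  have h0 : ∫ p in Omg L, (d2 F p * G p + F p * d2 G p) = 0 := by
    rw [show (fun p => d2 F p * G p + F p * d2 G p) = d2 (fun p => F p * G p) from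
      (d2_mul hF hG).symm]
    exact int_d2_zero (hF.mul hG) (hpF.mul hpG)
  rw [integral_add (f := fun p => d2 F p * G p) (g := fun p => F p * d2 G p) (intOn2 ((contDiff_d2 hF).continuous.mul hG.continuous))
    (intOn2 (hF.continuous.mul (contDiff_d2 hG).continuous))] at h0
  linarith

-- Hessian identity
lemma hess_eq {L : ℝ} (hL : 0 < L) {ξ : ℝ × ℝ → ℝ} (hξ : ContDiff ℝ (⊤ : ℕ∞) ξ)
    (hp : OmgPeriodic L ξ) :
    nrmSq L (d1 (d1 ξ)) + nrmSq L (d2 (d1 ξ)) + nrmSq L (d1 (d2 ξ)) + nrmSq L (d2 (d2 ξ))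
      = lapNrmSq L ξ := by
  have h1 : ContDiff ℝ (⊤ : ℕ∞) (d1 ξ) := contDiff_d1 hξ
  have h2 : ContDiff ℝ (⊤ : ℕ∞) (d2 ξ) := contDiff_d2 hξ
  have hp1 : OmgPeriodic L (d1 ξ) := hp.d1 hξ
  have hp2 : OmgPeriodic L (d2 ξ) := hp.d2' hξ
  have hcross : ∫ p in Omg L, d1 (d1 ξ) p * d2 (d2 ξ) p
      = ∫ p in Omg L, (d1 (d2 ξ) p)^2 := by
    rw [ibp1 hL h1 (contDiff_d2 h2) hp1 (hp2.d2' h2)]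
    rw [show d1 (d2 (d2 ξ)) = d2 (d1 (d2 ξ)) from clairaut h2]
    have := ibp2 (L := L) h1 (contDiff_d1 h2) hp1 (hp2.d1 h2)
    rw [show d2 (d1 ξ) = d1 (d2 ξ) from (clairaut hξ).symm] at this
    rw [← this]
    congr 1
    funext p
    rw [sq]
  have hsq : lapNrmSq L ξ = (∫ p in Omg L, (d1 (d1 ξ) p)^2)
      + (∫ p in Omg L, (d2 (d2 ξ) p)^2) + 2 * ∫ p in Omg L, d1 (d1 ξ) p * d2 (d2 ξ) p := by
    have e : (fun p => (lap ξ p)^2) = fun p =>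
        ((d1 (d1 ξ) p)^2 + (d2 (d2 ξ) p)^2) + 2 * (d1 (d1 ξ) p * d2 (d2 ξ) p) := by
      funext p; simp only [lap]; ring
    have A1 : IntegrableOn (fun p => (d1 (d1 ξ) p)^2) (Omg L) :=
      intOn2 ((contDiff_d1 h1).continuous.pow 2)
    have A2 : IntegrableOn (fun p => (d2 (d2 ξ) p)^2) (Omg L) :=
      intOn2 ((contDiff_d2 h2).continuous.pow 2)
    have A12 : IntegrableOn (fun p => (d1 (d1 ξ) p)^2 + (d2 (d2 ξ) p)^2) (Omg L) := A1.add A2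
    have A3 : IntegrableOn (fun p => 2 * (d1 (d1 ξ) p * d2 (d2 ξ) p)) (Omg L) :=
      (intOn2 ((contDiff_d1 h1).continuous.mul (contDiff_d2 h2).continuous)).const_mul 2
    rw [lapNrmSq, e, integral_add A12 A3, integral_add A1 A2, integral_const_mul]
  have h21 : nrmSq L (d2 (d1 ξ)) = nrmSq L (d1 (d2 ξ)) := by
    rw [show d2 (d1 ξ) = d1 (d2 ξ) from (clairaut hξ).symm]
  rw [hsq, h21, hcross]
  simp only [nrmSq]
  ring

set_option maxHeartbeats 1000000 in
lemma lady_alg {α β m sp s1 s2 : ℝ} (hsp : 0 ≤ sp) (hs1 : 0 ≤ s1) (hs2 : 0 ≤ s2) (hm : 0 ≤ m)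
    (hα0 : 0 ≤ α) (hβ0 : 0 ≤ β) (hα : α ≤ m*sp^2 + 2*sp*s1) (hβ : β ≤ m*sp^2 + 2*sp*s2) :
    α*β ≤ (m^2+2*m+2)*sp^2*(sp^2+s1^2+s2^2) := by
  nlinarith [mul_le_mul hα hβ hβ0 (by positivity),
    mul_nonneg (mul_nonneg hm (sq_nonneg sp)) (sq_nonneg (sp - s1)),
    mul_nonneg (mul_nonneg hm (sq_nonneg sp)) (sq_nonneg (sp - s2)),
    mul_nonneg (sq_nonneg sp) (sq_nonneg (s1 - s2)),
    mul_nonneg (mul_nonneg hsp hs1) (mul_nonneg hsp hs2)]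

lemma grad_split {L : ℝ} {f : ℝ × ℝ → ℝ} (hf : ContDiff ℝ (⊤ : ℕ∞) f) :
    gradNrmSq L f = nrmSq L (d1 f) + nrmSq L (d2 f) :=
  integral_add (intOn2 ((contDiff_d1 hf).continuous.pow 2))
    (intOn2 ((contDiff_d2 hf).continuous.pow 2))

lemma cs_sqrt {L : ℝ} {f g : ℝ × ℝ → ℝ} (hf : Continuous f) (hg : Continuous g) :
    ∫ p in Omg L, |f p| * |g p| ≤ Real.sqrt (nrmSq L f) * Real.sqrt (nrmSq L g) := by
  have h := cs_gen (μ := volume.restrict (Omg L)) (f := fun p => |f p|) (g := fun p => |g p|)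
    (memL2_2 hf.abs) (memL2_2 hg.abs)
  have e1 : (∫ p in Omg L, (|f p|)^2) = nrmSq L f := by
    simp only [nrmSq]; congr 1; funext p; exact sq_abs _
  have e2 : (∫ p in Omg L, (|g p|)^2) = nrmSq L g := by
    simp only [nrmSq]; congr 1; funext p; exact sq_abs _
  rw [e1, e2] at h
  exact (le_abs_self _).trans h

set_option maxHeartbeats 1000000 in
lemma lady {L : ℝ} (hL : 0 < L) {h : ℝ × ℝ → ℝ} (hh : ContDiff ℝ (⊤ : ℕ∞) h) :
    ∫ p in Omg L, (h p)^4 ≤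
      ((max L⁻¹ 2)^2 + 2*(max L⁻¹ 2) + 2) * nrmSq L h * (nrmSq L h + gradNrmSq L h) := by
  have hc : Continuous h := hh.continuous
  have h1c : Continuous (d1 h) := (contDiff_d1 hh).continuous
  have h2c : Continuous (d2 h) := (contDiff_d2 hh).continuous
  set P := nrmSq L h with hPdef
  set Q1 := nrmSq L (d1 h) with hQ1def
  set Q2 := nrmSq L (d2 h) with hQ2def
  have hP0 : 0 ≤ P := setIntegral_nonneg (omg_meas L) fun p _ => sq_nonneg _
  have hQ10 : 0 ≤ Q1 := setIntegral_nonneg (omg_meas L) fun p _ => sq_nonneg _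
  have hQ20 : 0 ≤ Q2 := setIntegral_nonneg (omg_meas L) fun p _ => sq_nonneg _
  -- the auxiliary functions
  set A : ℝ → ℝ := fun y => L⁻¹ * (∫ x in Set.Ioo (0:ℝ) L, (h (x, y))^2)
    + ∫ x in Set.Ioo (0:ℝ) L, |2 * h (x, y) * d1 h (x, y)| with hAdef
  set B : ℝ → ℝ := fun x => (2:ℝ)⁻¹ * (∫ y in Set.Ioo (-1:ℝ) 1, (h (x, y))^2)
    + ∫ y in Set.Ioo (-1:ℝ) 1, |2 * h (x, y) * d2 h (x, y)| with hBdef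
  -- derivative facts
  have hder1 : ∀ y t : ℝ, HasDerivAt (fun t => (h (t, y))^2) (2 * h (t, y) * d1 h (t, y)) t := by
    intro y t
    have := (hasDerivAt_d1 hh t y).fun_pow 2
    simpa using this
  have hder2 : ∀ x t : ℝ, HasDerivAt (fun t => (h (x, t))^2) (2 * h (x, t) * d2 h (x, t)) t := by
    intro x t
    have := (hasDerivAt_d2 hh x t).fun_pow 2
    simpa using this
  have hcontA1 : ∀ y : ℝ, Continuous (fun t => (h (t, y))^2) := fun y =>
    (hc.comp (continuous_id.prodMk continuous_const)).pow 2
  have hcontA2 : ∀ y : ℝ, Continuous (fun t => 2 * h (t, y) * d1 h (t, y)) := fun y =>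
    ((continuous_const.mul (hc.comp (continuous_id.prodMk continuous_const))).mul
      (h1c.comp (continuous_id.prodMk continuous_const)))
  have hcontB1 : ∀ x : ℝ, Continuous (fun t => (h (x, t))^2) := fun x =>
    (hc.comp (continuous_const.prodMk continuous_id)).pow 2
  have hcontB2 : ∀ x : ℝ, Continuous (fun t => 2 * h (x, t) * d2 h (x, t)) := fun x =>
    ((continuous_const.mul (hc.comp (continuous_const.prodMk continuous_id))).mul
      (h2c.comp (continuous_const.prodMk continuous_id)))
  -- pointwise bounds
  have hA : ∀ y : ℝ, ∀ x ∈ Set.Icc (0:ℝ) L, (h (x, y))^2 ≤ A y := by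
    intro y x hx
    have := oneD_bound hL (fun t => (h (t, y))^2) (fun t => 2 * h (t, y) * d1 h (t, y))
      (hder1 y) (hcontA1 y) (hcontA2 y) hx
    simpa [sub_zero, hAdef] using this
  have hB : ∀ x : ℝ, ∀ y ∈ Set.Icc (-1:ℝ) 1, (h (x, y))^2 ≤ B x := by
    intro x y hy
    have := oneD_bound (by norm_num : (-1:ℝ) < 1) (fun t => (h (x, t))^2)
      (fun t => 2 * h (x, t) * d2 h (x, t)) (hder2 x) (hcontB1 x) (hcontB2 x) hy
    have e : (1 - (-1:ℝ))⁻¹ = 2⁻¹ := by norm_num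
    rw [e] at this
    simpa [hBdef] using this
  have hA0 : ∀ y : ℝ, 0 ≤ A y := by
    intro y
    apply add_nonneg
    · exact mul_nonneg (by positivity)
        (setIntegral_nonneg measurableSet_Ioo fun x _ => sq_nonneg _)
    · exact setIntegral_nonneg measurableSet_Ioo fun x _ => abs_nonneg _
  -- β
  set β : ℝ := 2⁻¹ * P + ∫ p in Omg L, |2 * h p * d2 h p| with hβdef
  have hβ0 : 0 ≤ β := add_nonneg (mul_nonneg (by norm_num) hP0)
    (setIntegral_nonneg (omg_meas L) fun p _ => abs_nonneg _)
  -- integrability of B, and ∫ B = β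
  have hB_P : IntegrableOn (fun x => ∫ y in Set.Ioo (-1:ℝ) 1, (h (x, y))^2)
      (Set.Ioo (0:ℝ) L) := marg_x (L := L) (fun p => (h p)^2) (intOn2 (hc.pow 2))
  have hB_D : IntegrableOn (fun x => ∫ y in Set.Ioo (-1:ℝ) 1, |2 * h (x, y) * d2 h (x, y)|)
      (Set.Ioo (0:ℝ) L) := marg_x (L := L) (fun p => |2 * h p * d2 h p|)
        (intOn2 ((continuous_const.mul hc).mul h2c).abs)
  have hBint : IntegrableOn B (Set.Ioo (0:ℝ) L) := (hB_P.const_mul _).add hB_D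
  have hintB : ∫ x in Set.Ioo (0:ℝ) L, B x = β := by
    rw [hBdef, integral_add (hB_P.const_mul _) hB_D, integral_const_mul, hβdef]
    congr 1
    · congr 1
      exact (fub_xy (fun p => (h p)^2) (intOn2 (hc.pow 2))).symm
    · exact (fub_xy (fun p => |2 * h p * d2 h p|)
        (intOn2 ((continuous_const.mul hc).mul h2c).abs)).symm
  -- Claim C : for every y, the x-slice of h² is at most β
  have hC : ∀ y ∈ Set.Icc (-1:ℝ) 1, ∫ x in Set.Ioo (0:ℝ) L, (h (x, y))^2 ≤ β := by
    intro y hy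
    have : ∫ x in Set.Ioo (0:ℝ) L, (h (x, y))^2 ≤ ∫ x in Set.Ioo (0:ℝ) L, B x := by
      have i1 : IntegrableOn (fun x => (h (x, y))^2) (Set.Ioo (0:ℝ) L) := intOn1 (hcontA1 y)
      apply setIntegral_mono_on i1 hBint measurableSet_Ioo
      intro x _
      exact hB x y hy
    rwa [hintB] at this
  -- Claim D
  have hD : ∀ y ∈ Set.Icc (-1:ℝ) 1, ∫ x in Set.Ioo (0:ℝ) L, (h (x, y))^4 ≤ A y * β := by
    intro y hy
    have step1 : ∫ x in Set.Ioo (0:ℝ) L, (h (x, y))^4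
        ≤ ∫ x in Set.Ioo (0:ℝ) L, A y * (h (x, y))^2 := by
      have i1 : IntegrableOn (fun x => (h (x, y))^4) (Set.Ioo (0:ℝ) L) :=
        intOn1 ((hc.comp (continuous_id.prodMk continuous_const)).pow 4)
      have i2 : IntegrableOn (fun x => A y * (h (x, y))^2) (Set.Ioo (0:ℝ) L) :=
        (intOn1 (hcontA1 y)).const_mul _
      apply setIntegral_mono_on i1 i2 measurableSet_Ioo
      intro x hx
      have h2b := hA y x (Set.Ioo_subset_Icc_self hx)
      nlinarith [sq_nonneg (h (x, y)), mul_le_mul_of_nonneg_left h2b (sq_nonneg (h (x, y)))]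
    calc ∫ x in Set.Ioo (0:ℝ) L, (h (x, y))^4
        ≤ ∫ x in Set.Ioo (0:ℝ) L, A y * (h (x, y))^2 := step1
      _ = A y * ∫ x in Set.Ioo (0:ℝ) L, (h (x, y))^2 := integral_const_mul _ _
      _ ≤ A y * β := mul_le_mul_of_nonneg_left (hC y hy) (hA0 y)
  -- α
  set α : ℝ := L⁻¹ * P + ∫ p in Omg L, |2 * h p * d1 h p| with hαdef
  have hα0 : 0 ≤ α := add_nonneg (mul_nonneg (by positivity) hP0)
    (setIntegral_nonneg (omg_meas L) fun p _ => abs_nonneg _)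
  have hA_P : IntegrableOn (fun y => ∫ x in Set.Ioo (0:ℝ) L, (h (x, y))^2)
      (Set.Ioo (-1:ℝ) 1) := marg_y (L := L) (fun p => (h p)^2) (intOn2 (hc.pow 2))
  have hA_D : IntegrableOn (fun y => ∫ x in Set.Ioo (0:ℝ) L, |2 * h (x, y) * d1 h (x, y)|)
      (Set.Ioo (-1:ℝ) 1) := marg_y (L := L) (fun p => |2 * h p * d1 h p|)
        (intOn2 ((continuous_const.mul hc).mul h1c).abs)
  have hAint : IntegrableOn A (Set.Ioo (-1:ℝ) 1) := (hA_P.const_mul _).add hA_D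
  have hintA : ∫ y in Set.Ioo (-1:ℝ) 1, A y = α := by
    rw [hAdef, integral_add (hA_P.const_mul _) hA_D, integral_const_mul, hαdef]
    congr 1
    · congr 1
      exact (fub_yx (fun p => (h p)^2) (intOn2 (hc.pow 2))).symm
    · exact (fub_yx (fun p => |2 * h p * d1 h p|)
        (intOn2 ((continuous_const.mul hc).mul h1c).abs)).symm
  -- main chain
  have main : ∫ p in Omg L, (h p)^4 ≤ α * β := by
    calc ∫ p in Omg L, (h p)^4
        = ∫ y in Set.Ioo (-1:ℝ) 1, ∫ x in Set.Ioo (0:ℝ) L, (h (x, y))^4 :=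
          fub_yx _ (intOn2 (hc.pow 4))
      _ ≤ ∫ y in Set.Ioo (-1:ℝ) 1, A y * β := by
          have i1 : IntegrableOn (fun y => ∫ x in Set.Ioo (0:ℝ) L, (h (x, y))^4)
              (Set.Ioo (-1:ℝ) 1) := marg_y (L := L) (fun p => (h p)^4) (intOn2 (hc.pow 4))
          have i2 : IntegrableOn (fun y => A y * β) (Set.Ioo (-1:ℝ) 1) := hAint.mul_const β
          apply setIntegral_mono_on i1 i2 measurableSet_Ioo
          intro y hy
          exact hD y (Set.Ioo_subset_Icc_self hy)
      _ = α * β := by rw [integral_mul_const, hintA]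
  -- CS bounds
  have habs1 : (∫ p in Omg L, |2 * h p * d1 h p|) = 2 * ∫ p in Omg L, |h p| * |d1 h p| := by
    rw [← integral_const_mul]
    congr 1
    funext p
    rw [abs_mul, abs_mul, abs_two]
    ring
  have habs2 : (∫ p in Omg L, |2 * h p * d2 h p|) = 2 * ∫ p in Omg L, |h p| * |d2 h p| := by
    rw [← integral_const_mul]
    congr 1
    funext p
    rw [abs_mul, abs_mul, abs_two]
    ring
  have hαb : α ≤ L⁻¹ * P + 2 * (Real.sqrt P * Real.sqrt Q1) := by
    rw [hαdef, habs1]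
    have := cs_sqrt (L := L) hc h1c
    rw [← hPdef, ← hQ1def] at this
    nlinarith
  have hβb : β ≤ 2⁻¹ * P + 2 * (Real.sqrt P * Real.sqrt Q2) := by
    rw [hβdef, habs2]
    have := cs_sqrt (L := L) hc h2c
    rw [← hPdef, ← hQ2def] at this
    nlinarith
  -- final algebra
  set m : ℝ := max L⁻¹ 2 with hmdef
  have hm0 : (0:ℝ) ≤ m := le_trans (by norm_num) (le_max_right _ _)
  have hmL : L⁻¹ ≤ m := le_max_left _ _
  have hm2 : (2:ℝ)⁻¹ ≤ m := le_trans (by norm_num) (le_max_right _ _)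
  have hsp : Real.sqrt P ^ 2 = P := Real.sq_sqrt hP0
  have hs1 : Real.sqrt Q1 ^ 2 = Q1 := Real.sq_sqrt hQ10
  have hs2 : Real.sqrt Q2 ^ 2 = Q2 := Real.sq_sqrt hQ20
  have halg := lady_alg (Real.sqrt_nonneg P) (Real.sqrt_nonneg Q1) (Real.sqrt_nonneg Q2)
    hm0 hα0 hβ0
    (by clear_value P Q1 Q2 α β m; rw [hsp]
        linarith [hαb, mul_le_mul_of_nonneg_right hmL hP0])
    (by clear_value P Q1 Q2 α β m; rw [hsp]
        linarith [hβb, mul_le_mul_of_nonneg_right hm2 hP0])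
  rw [hsp, hs1, hs2] at halg
  have hgs : gradNrmSq L h = Q1 + Q2 := grad_split hh
  calc ∫ p in Omg L, (h p)^4 ≤ α * β := main
    _ ≤ (m^2+2*m+2) * P * (P + Q1 + Q2) := by
        clear_value P Q1 Q2 α β m
        nlinarith [halg]
    _ = (m^2+2*m+2) * nrmSq L h * (nrmSq L h + gradNrmSq L h) := by
        rw [hgs, ← hPdef]; ring

lemma young4 {u s κ : ℝ} (hu : 0 ≤ u) (hs : 0 ≤ s) (hκ : 0 < κ) :
    u * Real.sqrt s * s ≤ κ/20 * s^2 + (3375/4) * u^4 / κ^3 := by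
  set r := Real.sqrt s with hrdef
  have hr0 : 0 ≤ r := Real.sqrt_nonneg s
  have hrs : r^2 = s := Real.sq_sqrt hs
  rw [← hrs]
  set a := κ * r with hadef
  have key : a^3 * u ≤ a^4/20 + 3375/4 * u^4 := by
    nlinarith [mul_nonneg (sq_nonneg (a - 15*u)) (sq_nonneg (a + 5*u)),
      mul_nonneg (sq_nonneg (a - 15*u)) (sq_nonneg u)]
  have hκ3 : (0:ℝ) < κ^3 := by positivity
  have e1 : u * r * r^2 = (a^3 * u) / κ^3 := by
    rw [hadef]; field_simp
  rw [e1]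
  calc (a^3 * u) / κ^3 ≤ (a^4/20 + 3375/4 * u^4) / κ^3 :=
        div_le_div_of_nonneg_right key hκ3.le
    _ = κ/20 * (r^2)^2 + 3375/4 * u^4 / κ^3 := by
        rw [hadef]; field_simp

lemma final_alg {I W Ev Eξ P QV G2 D2 CL K κ : ℝ}
    (hI : I ≤ Real.sqrt W * Real.sqrt D2)
    (hP0 : 0 ≤ P) (hQV0 : 0 ≤ QV) (hG0 : 0 ≤ G2) (hD0 : 0 ≤ D2)
    (hCL : 0 ≤ CL) (hK : 0 ≤ K)
    (hW : W ≤ Real.sqrt Ev * Real.sqrt Eξ)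
    (hEv : Ev ≤ 2*CL*P*(P+QV)) (hEξ : Eξ ≤ 2*CL*G2*(G2+D2))
    (hG : G2 ≤ K*D2) (hκ : 0 < κ) :
    I ≤ κ/20 * D2 + (3375*CL^2*(K+1))/κ^3 * P * (P+QV) * G2 := by
  set X := P * (P + QV) with hXdef
  have hX0 : 0 ≤ X := mul_nonneg hP0 (by linarith)
  have s1 : Real.sqrt Ev ≤ Real.sqrt (2*CL) * Real.sqrt X := by
    rw [← Real.sqrt_mul (by positivity)]
    exact Real.sqrt_le_sqrt (by rw [hXdef]; nlinarith)
  have s2 : Real.sqrt Eξ ≤ Real.sqrt (2*CL) * (Real.sqrt G2 * (Real.sqrt (K+1) * Real.sqrt D2)) := by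
    have hstep : Eξ ≤ (2*CL) * (G2 * ((K+1) * D2)) := by
      have h1 : G2 + D2 ≤ (K+1)*D2 := by nlinarith
      nlinarith [mul_le_mul_of_nonneg_left h1 (mul_nonneg (by linarith : (0:ℝ) ≤ 2*CL) hG0)]
    calc Real.sqrt Eξ ≤ Real.sqrt ((2*CL) * (G2 * ((K+1) * D2))) := Real.sqrt_le_sqrt hstep
      _ = Real.sqrt (2*CL) * (Real.sqrt G2 * (Real.sqrt (K+1) * Real.sqrt D2)) := by
          rw [Real.sqrt_mul (by positivity), Real.sqrt_mul hG0, Real.sqrt_mul (show (0:ℝ) ≤ K+1 by linarith) D2]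
  set R : ℝ := (2*CL) * (Real.sqrt X * Real.sqrt G2 * Real.sqrt (K+1)) with hRdef
  have hR0 : 0 ≤ R := by positivity
  have hWR : W ≤ R * Real.sqrt D2 := by
    calc W ≤ Real.sqrt Ev * Real.sqrt Eξ := hW
      _ ≤ (Real.sqrt (2*CL) * Real.sqrt X) *
          (Real.sqrt (2*CL) * (Real.sqrt G2 * (Real.sqrt (K+1) * Real.sqrt D2))) := by
          apply mul_le_mul s1 s2 (Real.sqrt_nonneg _) (by positivity)
      _ = (Real.sqrt (2*CL) * Real.sqrt (2*CL)) *
          (Real.sqrt X * Real.sqrt G2 * Real.sqrt (K+1)) * Real.sqrt D2 := by ring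
      _ = R * Real.sqrt D2 := by
          rw [Real.mul_self_sqrt (by positivity), hRdef]
  have hsw : Real.sqrt W ≤ Real.sqrt R * Real.sqrt (Real.sqrt D2) := by
    rw [← Real.sqrt_mul hR0]
    exact Real.sqrt_le_sqrt hWR
  have hI2 : I ≤ Real.sqrt R * Real.sqrt (Real.sqrt D2) * Real.sqrt D2 := by
    calc I ≤ Real.sqrt W * Real.sqrt D2 := hI
      _ ≤ (Real.sqrt R * Real.sqrt (Real.sqrt D2)) * Real.sqrt D2 :=
          mul_le_mul_of_nonneg_right hsw (Real.sqrt_nonneg _)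
  have hy := young4 (u := Real.sqrt R) (s := Real.sqrt D2)
    (Real.sqrt_nonneg R) (Real.sqrt_nonneg D2) hκ
  have e1 : (Real.sqrt D2)^2 = D2 := Real.sq_sqrt hD0
  have e2 : (Real.sqrt R)^4 = R^2 := by
    rw [show (Real.sqrt R)^4 = ((Real.sqrt R)^2)^2 by ring, Real.sq_sqrt hR0]
  have e3 : R^2 = 4*CL^2*(X*G2*(K+1)) := by
    rw [hRdef]
    have : (Real.sqrt X * Real.sqrt G2 * Real.sqrt (K+1))^2
        = (Real.sqrt X)^2 * (Real.sqrt G2)^2 * (Real.sqrt (K+1))^2 := by ring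
    rw [mul_pow, this, Real.sq_sqrt hX0, Real.sq_sqrt hG0, Real.sq_sqrt (by linarith : (0:ℝ) ≤ K+1)]
    ring
  rw [e1, e2, e3] at hy
  calc I ≤ Real.sqrt R * Real.sqrt (Real.sqrt D2) * Real.sqrt D2 := hI2
    _ ≤ κ/20 * D2 + 3375/4 * (4*CL^2*(X*G2*(K+1))) / κ^3 := hy
    _ = κ/20 * D2 + (3375*CL^2*(K+1))/κ^3 * P * (P+QV) * G2 := by
        rw [hXdef]; field_simp


set_option maxHeartbeats 2000000 in
/-- estimate (3.24) of the paper: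
`|∫_Ω ((v·∇)ξ) Δξ| ≤ (κ/20)‖Δξ‖² + (c/κ³)‖v‖²(‖v‖² + ‖∇v‖²)‖∇ξ‖²`. -/
theorem transport_laplacian_estimate (L : ℝ) (hL : 0 < L) :
    ∃ c : ℝ, 0 < c ∧ ∀ κ : ℝ, 0 < κ →
      ∀ v₁ v₂ ξ : ℝ × ℝ → ℝ,
        ContDiff ℝ (⊤ : ℕ∞) v₁ → ContDiff ℝ (⊤ : ℕ∞) v₂ → ContDiff ℝ (⊤ : ℕ∞) ξ →
        OmgPeriodic L v₁ → OmgPeriodic L v₂ → OmgPeriodic L ξ →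
        DivFree v₁ v₂ →
        |∫ p in Omg L, (v₁ p * d1 ξ p + v₂ p * d2 ξ p) * lap ξ p| ≤
          κ / 20 * lapNrmSq L ξ
            + c / κ ^ 3 * (nrmSq L v₁ + nrmSq L v₂)
                * ((nrmSq L v₁ + nrmSq L v₂) + (gradNrmSq L v₁ + gradNrmSq L v₂))
                * gradNrmSq L ξ := by
  have hm2 : (2:ℝ) ≤ max L⁻¹ 2 := le_max_right _ _
  set m : ℝ := max L⁻¹ 2 with hmdef
  set CL : ℝ := m^2 + 2*m + 2 with hCLdef
  set K : ℝ := max (L^2) 4 with hKdef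
  have hCLpos : 0 < CL := by nlinarith
  have hK4 : (4:ℝ) ≤ K := le_max_right _ _
  have hKL : L^2 ≤ K := le_max_left _ _
  have hK0 : (0:ℝ) ≤ K := by linarith
  have hcpos : 0 < 3375*CL^2*(K+1) := by positivity
  refine ⟨3375*CL^2*(K+1), hcpos, ?_⟩
  intro κ hκ v₁ v₂ ξ hv₁ hv₂ hξ hpv₁ hpv₂ hpξ _
  -- continuity facts
  have hv₁c : Continuous v₁ := hv₁.continuous
  have hv₂c : Continuous v₂ := hv₂.continuous
  have hd1ξ : Continuous (d1 ξ) := (contDiff_d1 hξ).continuous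
  have hd2ξ : Continuous (d2 ξ) := (contDiff_d2 hξ).continuous
  have hlapc : Continuous (lap ξ) := by
    show Continuous fun p => d1 (d1 ξ) p + d2 (d2 ξ) p
    exact (contDiff_d1 (contDiff_d1 hξ)).continuous.add
      (contDiff_d2 (contDiff_d2 hξ)).continuous
  have hfc : Continuous (fun p => v₁ p * d1 ξ p + v₂ p * d2 ξ p) :=
    (hv₁c.mul hd1ξ).add (hv₂c.mul hd2ξ)
  have hFc : Continuous (fun p => (v₁ p)^2 + (v₂ p)^2) := (hv₁c.pow 2).add (hv₂c.pow 2)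
  have hGc : Continuous (fun p => (d1 ξ p)^2 + (d2 ξ p)^2) := (hd1ξ.pow 2).add (hd2ξ.pow 2)
  -- nonnegativity facts
  have hn0 : ∀ f : ℝ × ℝ → ℝ, 0 ≤ nrmSq L f := fun f =>
    setIntegral_nonneg (omg_meas L) fun p _ => sq_nonneg _
  have hg0 : ∀ f : ℝ × ℝ → ℝ, 0 ≤ gradNrmSq L f := fun f =>
    setIntegral_nonneg (omg_meas L) fun p _ => add_nonneg (sq_nonneg _) (sq_nonneg _)
  have hl0 : 0 ≤ lapNrmSq L ξ := setIntegral_nonneg (omg_meas L) fun p _ => sq_nonneg _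
  -- Step 1 : Cauchy-Schwarz for the main integral
  have hI : |∫ p in Omg L, (v₁ p * d1 ξ p + v₂ p * d2 ξ p) * lap ξ p| ≤
      Real.sqrt (∫ p in Omg L, (v₁ p * d1 ξ p + v₂ p * d2 ξ p)^2)
        * Real.sqrt (lapNrmSq L ξ) :=
    cs_gen (memL2_2 hfc) (memL2_2 hlapc)
  -- Step 2 : pointwise Cauchy-Schwarz and Hölder
  have hW : (∫ p in Omg L, (v₁ p * d1 ξ p + v₂ p * d2 ξ p)^2) ≤
      Real.sqrt (∫ p in Omg L, ((v₁ p)^2 + (v₂ p)^2)^2)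
        * Real.sqrt (∫ p in Omg L, ((d1 ξ p)^2 + (d2 ξ p)^2)^2) := by
    have step_a : (∫ p in Omg L, (v₁ p * d1 ξ p + v₂ p * d2 ξ p)^2) ≤
        ∫ p in Omg L, ((v₁ p)^2 + (v₂ p)^2) * ((d1 ξ p)^2 + (d2 ξ p)^2) := by
      have i1 : IntegrableOn (fun p => (v₁ p * d1 ξ p + v₂ p * d2 ξ p)^2) (Omg L) :=
        intOn2 (hfc.pow 2)
      have i2 : IntegrableOn (fun p => ((v₁ p)^2 + (v₂ p)^2) * ((d1 ξ p)^2 + (d2 ξ p)^2))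
          (Omg L) := intOn2 (hFc.mul hGc)
      apply setIntegral_mono_on i1 i2 (omg_meas L)
      intro p _
      nlinarith [sq_nonneg (v₁ p * d2 ξ p - v₂ p * d1 ξ p)]
    have step_b := cs_gen (μ := volume.restrict (Omg L))
      (f := fun p => (v₁ p)^2 + (v₂ p)^2) (g := fun p => (d1 ξ p)^2 + (d2 ξ p)^2)
      (memL2_2 hFc) (memL2_2 hGc)
    exact step_a.trans ((le_abs_self _).trans step_b)
  -- Step 3 : Ladyzhenskaya for v
  have hEv : (∫ p in Omg L, ((v₁ p)^2 + (v₂ p)^2)^2) ≤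
      2*CL*(nrmSq L v₁ + nrmSq L v₂)
        *((nrmSq L v₁ + nrmSq L v₂) + (gradNrmSq L v₁ + gradNrmSq L v₂)) := by
    have i1 : IntegrableOn (fun p => (v₁ p)^4) (Omg L) := intOn2 (hv₁c.pow 4)
    have i2 : IntegrableOn (fun p => (v₂ p)^4) (Omg L) := intOn2 (hv₂c.pow 4)
    have i12 : IntegrableOn (fun p => 2*(v₁ p)^4 + 2*(v₂ p)^4) (Omg L) :=
      (i1.const_mul 2).add (i2.const_mul 2)
    have step_a : (∫ p in Omg L, ((v₁ p)^2 + (v₂ p)^2)^2) ≤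
        ∫ p in Omg L, (2*(v₁ p)^4 + 2*(v₂ p)^4) := by
      apply setIntegral_mono_on (intOn2 (hFc.pow 2)) i12 (omg_meas L)
      intro p _
      simp only [Pi.pow_apply]
      nlinarith [sq_nonneg ((v₁ p)^2 - (v₂ p)^2)]
    have step_b : (∫ p in Omg L, (2*(v₁ p)^4 + 2*(v₂ p)^4)) =
        2*(∫ p in Omg L, (v₁ p)^4) + 2*(∫ p in Omg L, (v₂ p)^4) := by
      rw [integral_add (i1.const_mul 2) (i2.const_mul 2), integral_const_mul, integral_const_mul]
    have l1 := lady hL hv₁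
    have l2 := lady hL hv₂
    rw [← hmdef, ← hCLdef] at l1 l2
    have n1 := hn0 v₁; have n2 := hn0 v₂; have g1 := hg0 v₁; have g2 := hg0 v₂
    rw [step_b] at step_a
    nlinarith [step_a, l1, l2, mul_nonneg hCLpos.le (mul_nonneg n1 n2),
      mul_nonneg hCLpos.le (mul_nonneg n1 g2), mul_nonneg hCLpos.le (mul_nonneg n2 g1)]
  -- second-derivative identities
  have hgs : gradNrmSq L ξ = nrmSq L (d1 ξ) + nrmSq L (d2 ξ) := grad_split hξ
  have hb1 : gradNrmSq L (d1 ξ) = nrmSq L (d1 (d1 ξ)) + nrmSq L (d2 (d1 ξ)) :=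
    grad_split (contDiff_d1 hξ)
  have hb2 : gradNrmSq L (d2 ξ) = nrmSq L (d1 (d2 ξ)) + nrmSq L (d2 (d2 ξ)) :=
    grad_split (contDiff_d2 hξ)
  have hhess := hess_eq hL hξ hpξ
  -- Step 4 : Ladyzhenskaya for ∇ξ
  have hEξ : (∫ p in Omg L, ((d1 ξ p)^2 + (d2 ξ p)^2)^2) ≤
      2*CL*(gradNrmSq L ξ)*((gradNrmSq L ξ) + lapNrmSq L ξ) := by
    have i1 : IntegrableOn (fun p => (d1 ξ p)^4) (Omg L) := intOn2 (hd1ξ.pow 4)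
    have i2 : IntegrableOn (fun p => (d2 ξ p)^4) (Omg L) := intOn2 (hd2ξ.pow 4)
    have i12 : IntegrableOn (fun p => 2*(d1 ξ p)^4 + 2*(d2 ξ p)^4) (Omg L) :=
      (i1.const_mul 2).add (i2.const_mul 2)
    have step_a : (∫ p in Omg L, ((d1 ξ p)^2 + (d2 ξ p)^2)^2) ≤
        ∫ p in Omg L, (2*(d1 ξ p)^4 + 2*(d2 ξ p)^4) := by
      apply setIntegral_mono_on (intOn2 (hGc.pow 2)) i12 (omg_meas L)
      intro p _
      simp only [Pi.pow_apply]
      nlinarith [sq_nonneg ((d1 ξ p)^2 - (d2 ξ p)^2)]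
    have step_b : (∫ p in Omg L, (2*(d1 ξ p)^4 + 2*(d2 ξ p)^4)) =
        2*(∫ p in Omg L, (d1 ξ p)^4) + 2*(∫ p in Omg L, (d2 ξ p)^4) := by
      rw [integral_add (i1.const_mul 2) (i2.const_mul 2), integral_const_mul, integral_const_mul]
    have l1 := lady hL (contDiff_d1 hξ)
    have l2 := lady hL (contDiff_d2 hξ)
    rw [← hmdef, ← hCLdef] at l1 l2
    have n1 := hn0 (d1 ξ); have n2 := hn0 (d2 ξ)
    have g1 := hg0 (d1 ξ); have g2 := hg0 (d2 ξ)
    rw [step_b] at step_a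
    rw [hgs]
    have hsum : gradNrmSq L (d1 ξ) + gradNrmSq L (d2 ξ) = lapNrmSq L ξ := by
      rw [hb1, hb2, ← hhess]; ring
    rw [← hsum]
    nlinarith [step_a, l1, l2, mul_nonneg hCLpos.le (mul_nonneg n1 n2),
      mul_nonneg hCLpos.le (mul_nonneg n1 g2), mul_nonneg hCLpos.le (mul_nonneg n2 g1)]
  -- Step 5 : Poincaré
  have hG : gradNrmSq L ξ ≤ K * lapNrmSq L ξ := by
    have p1 : nrmSq L (d1 ξ) ≤ L^2 * nrmSq L (d1 (d1 ξ)) :=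
      poincare_x hL (contDiff_d1 hξ) (zero_avg_x hL hξ hpξ)
    have p2 : nrmSq L (d2 ξ) ≤ 4 * nrmSq L (d2 (d2 ξ)) :=
      poincare_y (contDiff_d2 hξ) (zero_avg_y hξ hpξ)
    have hcross : nrmSq L (d1 (d1 ξ)) + nrmSq L (d2 (d2 ξ)) ≤ lapNrmSq L ξ := by
      have := hn0 (d2 (d1 ξ)); have := hn0 (d1 (d2 ξ))
      linarith [hhess]
    have n11 := hn0 (d1 (d1 ξ)); have n22 := hn0 (d2 (d2 ξ))
    rw [hgs]
    nlinarith [mul_le_mul_of_nonneg_right hKL n11, mul_le_mul_of_nonneg_right hK4 n22,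
      mul_le_mul_of_nonneg_left hcross hK0]
  -- conclude
  exact final_alg hI (add_nonneg (hn0 v₁) (hn0 v₂)) (add_nonneg (hg0 v₁) (hg0 v₂))
    (hg0 ξ) hl0 hCLpos.le hK0 hW hEv hEξ hG hκ
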